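/- Let M and N be rectangle persistence modules with rectangles (a₁,b₁)×(a₂,b₂) and (c₁,d₁)×(c₂,d₂). If max{‖c−a‖_∞, ‖d−b‖_∞} < min{ min_i(d_i−a_i), min_i(b_i−c_i) }, then d_I(M,N) ≤ max{‖c−a‖_∞, ‖d−b‖_∞}. -/

import Mathlib

open Classical

noncomputable section

/-- A point of the parameter space `ℝⁿ`. -/
abbrev Pt (n : ℕ) := Fin n → ℝ

/-- Shift of a point by the diagonal vector `(ε, …, ε)`. -/
def shiftPt {n : ℕ} (u : Pt n) (ε : ℝ) : Pt n := fun i => u i + ε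

lemma shiftPt_mono {n : ℕ} {u v : Pt n} (ε : ℝ) (h : u ≤ v) :
    shiftPt u ε ≤ shiftPt v ε := fun i => by unfold shiftPt; linarith [h i]

lemma le_shiftPt {n : ℕ} (u : Pt n) {ε : ℝ} (hε : 0 ≤ ε) : u ≤ shiftPt u ε :=
  fun i => le_add_of_nonneg_right hε

/-- An `n`-parameter persistence module over the field `k`. -/
structure PersMod (k : Type) [Field k] (n : ℕ) where
  obj : Pt n → Type
  [acg : ∀ u, AddCommGroup (obj u)]
  [mod : ∀ u, Module k (obj u)]
  map : ∀ {u v : Pt n}, u ≤ v → (obj u →ₗ[k] obj v)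
  map_id : ∀ u : Pt n, map (le_refl u) = LinearMap.id
  map_comp : ∀ {u v w : Pt n} (h1 : u ≤ v) (h2 : v ≤ w),
    (map h2).comp (map h1) = map (h1.trans h2)

attribute [instance] PersMod.acg PersMod.mod

variable {k : Type} [Field k] {n : ℕ}

/-- A morphism of persistence modules. -/
structure PersHom (M N : PersMod k n) where
  app : ∀ u, M.obj u →ₗ[k] N.obj u
  natural : ∀ {u v : Pt n} (h : u ≤ v),
    (app v).comp (M.map h) = (N.map h).comp (app u)

/-- A morphism is trivial when every component is the zero map. -/
def PersHom.Trivial {M N : PersMod k n} (f : PersHom M N) : Prop := ∀ u, f.app u = 0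

/-- The `ε`-shift of a persistence module. -/
def PersMod.shift (M : PersMod k n) (ε : ℝ) : PersMod k n where
  obj u := M.obj (shiftPt u ε)
  map h := M.map (shiftPt_mono ε h)
  map_id u := M.map_id _
  map_comp h1 h2 := M.map_comp _ _

/-- `(f, g)` is an `ε`-interleaving pair between `M` and `N`. -/
def IsInterleavingPair (M N : PersMod k n) (ε : ℝ) (hε : 0 ≤ ε)
    (f : PersHom M (N.shift ε)) (g : PersHom N (M.shift ε)) : Prop :=
  (∀ u : Pt n, (g.app (shiftPt u ε)).comp (f.app u) =
      M.map ((le_shiftPt u hε).trans (le_shiftPt _ hε))) ∧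
  (∀ u : Pt n, (f.app (shiftPt u ε)).comp (g.app u) =
      N.map ((le_shiftPt u hε).trans (le_shiftPt _ hε)))

/-- `M` and `N` are `ε`-interleaved. -/
def Interleaved (M N : PersMod k n) (ε : ℝ) : Prop :=
  ∃ (hε : 0 ≤ ε) (f : PersHom M (N.shift ε)) (g : PersHom N (M.shift ε)),
    IsInterleavingPair M N ε hε f g

/-- The interleaving distance, with value in the extended reals. -/
def interleavingDist (M N : PersMod k n) : EReal :=
  sInf {x : EReal | ∃ ε : ℝ, Interleaved M N ε ∧ x = (ε : EReal)}

/-- `M` is `ε`-trivial : all transition maps `M_u → M_{u+(ε,…,ε)}` vanish. -/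
def EpsTrivial (M : PersMod k n) (ε : ℝ) : Prop :=
  ∀ (u : Pt n) (h : u ≤ shiftPt u ε), M.map h = 0

/-- The zero persistence module. -/
def ZeroMod (k : Type) [Field k] (n : ℕ) : PersMod k n where
  obj _ := PUnit
  map _ := 0
  map_id _ := by apply LinearMap.ext; intro x; exact Subsingleton.elim _ _
  map_comp _ _ := by apply LinearMap.ext; intro x; exact Subsingleton.elim _ _

/-- The space at `u` of the interval module on `I` : all of `k` if `u ∈ I`, `0` otherwise. -/
def segSpace (k : Type) [Field k] {n : ℕ} (I : Set (Pt n)) (u : Pt n) : Submodule k k where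
  carrier := {x | u ∉ I → x = 0}
  add_mem' := by intro x y hx hy h; simp only [Set.mem_setOf_eq] at *; rw [hx h, hy h, add_zero]
  zero_mem' := fun _ => rfl
  smul_mem' := by intro c x hx h; simp only [Set.mem_setOf_eq] at *; rw [hx h, smul_zero]

/-- The interval persistence module on an order-convex set `I` : `k` on `I` with identity
internal transition maps, `0` elsewhere. -/
def IntervalMod (k : Type) [Field k] {n : ℕ} (I : Set (Pt n)) (hI : I.OrdConnected) :
    PersMod k n where
  obj u := segSpace k I u
  map {u v} h :=
    { toFun := fun x => ⟨if v ∈ I then (x : k) else 0, by intro hv; simp [hv]⟩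
      map_add' := by intro x y; apply Subtype.ext; by_cases hv : v ∈ I <;> simp [hv]
      map_smul' := by intro c x; apply Subtype.ext; by_cases hv : v ∈ I <;> simp [hv] }
  map_id u := by
    apply LinearMap.ext; intro x
    apply Subtype.ext
    by_cases hu : u ∈ I
    · simp [hu]
    · simp [hu, x.2 hu]
  map_comp {u v w} h1 h2 := by
    apply LinearMap.ext; intro x
    apply Subtype.ext
    by_cases hw : w ∈ I
    · by_cases hv : v ∈ I
      · simp [hw, hv]
      · by_cases hu : u ∈ I
        · exact absurd (hI.out hu hw ⟨h1, h2⟩) hv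
        · simp [hw, hv, x.2 hu]
    · simp [hw]

/-- The open box `∏ᵢ (aᵢ, bᵢ)` with extended-real endpoints. -/
def box {n : ℕ} (a b : Fin n → EReal) : Set (Pt n) :=
  {u | ∀ i, a i < (u i : EReal) ∧ (u i : EReal) < b i}

lemma box_ordConnected {n : ℕ} (a b : Fin n → EReal) : (box a b).OrdConnected := by
  constructor
  intro u hu w hw v hv i
  exact ⟨lt_of_lt_of_le (hu i).1 (by exact_mod_cast hv.1 i),
    lt_of_le_of_lt (by exact_mod_cast hv.2 i) (hw i).2⟩

/-- The rectangle persistence module with underlying open rectangle `∏ᵢ (aᵢ, bᵢ)`. -/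
def RectMod (k : Type) [Field k] {n : ℕ} (a b : Fin n → EReal) : PersMod k n :=
  IntervalMod k (box a b) (box_ordConnected a b)

/-- Subtraction of extended reals with the conventions `(±∞) − (±∞) = 0`. -/
def esub (x y : EReal) : EReal :=
  if (x = ⊤ ∧ y = ⊤) ∨ (x = ⊥ ∧ y = ⊥) then 0 else x - y

/-- Absolute value on the extended reals (`|±∞| = +∞`). -/
def eabs (x : EReal) : EReal := max x (-x)

/-- The `ℓ^∞`-distance `‖x − y‖_∞` on extended `ℝⁿ`. -/
def supDist {n : ℕ} (x y : Fin n → EReal) : EReal := ⨆ i, eabs (esub (x i) (y i))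

/-- The closed formula for the interleaving distance between the rectangle modules with
rectangles `∏ (aᵢ, bᵢ)` and `∏ (cᵢ, dᵢ)`. -/
def dIFormula {n : ℕ} (a b c d : Fin n → EReal) : EReal :=
  min (max (⨅ i, esub (b i) (a i) / 2) (⨅ i, esub (d i) (c i) / 2))
      (max (supDist c a) (supDist d b))

/-- `M` and `N` are isomorphic persistence modules. -/
def PersIso (M N : PersMod k n) : Prop :=
  ∃ f : PersHom M N, ∀ u, Function.Bijective (f.app u)

/-- `M` is a non-zero persistence module. -/
def PersMod.Nonzero (M : PersMod k n) : Prop := ∃ (u : Pt n) (x : M.obj u), x ≠ 0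

/-- Direct sum of two persistence modules. -/
def dirSum (M N : PersMod k n) : PersMod k n where
  obj u := M.obj u × N.obj u
  map h := (M.map h).prodMap (N.map h)
  map_id u := by
    apply LinearMap.ext; intro x
    show ((M.map (le_refl u)) x.1, (N.map (le_refl u)) x.2) = x
    rw [M.map_id, N.map_id]; rfl
  map_comp h1 h2 := by
    apply LinearMap.ext; intro x
    show ((M.map _) ((M.map _) x.1), (N.map _) ((N.map _) x.2))
      = ((M.map _) x.1, (N.map _) x.2)
    have hM : (M.map h2) ((M.map h1) x.1) = (M.map (h1.trans h2)) x.1 := by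
      rw [← M.map_comp h1 h2]; rfl
    have hN : (N.map h2) ((N.map h1) x.2) = (N.map (h1.trans h2)) x.2 := by
      rw [← N.map_comp h1 h2]; rfl
    rw [hM, hN]

/-- Zigzag-connectedness of a subset of `ℝⁿ`. -/
def ZigzagConnected {n : ℕ} (I : Set (Pt n)) : Prop :=
  ∀ u ∈ I, ∀ v ∈ I,
    Relation.ReflTransGen (fun x y => x ∈ I ∧ y ∈ I ∧ (x ≤ y ∨ y ≤ x)) u v

/-- `I` is an interval in `ℝⁿ`: nonempty, order-convex and zigzag-connected. -/
def IsInterval {n : ℕ} (I : Set (Pt n)) : Prop :=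
  I.Nonempty ∧ I.OrdConnected ∧ ZigzagConnected I

/-- A partial multibijection `Fin m ⇸ Fin k'`, encoded by an `Option`-valued map that is
injective on matched indices. -/
def PartialInj {m k' : ℕ} (σ : Fin m → Option (Fin k')) : Prop :=
  ∀ i j l, σ i = some l → σ j = some l → i = j

/-- `σ` is an `ε`-matching between the barcodes `A` and `B` (families of intervals). -/
def IsEpsMatching (k : Type) [Field k] {n m k' : ℕ}
    (A : Fin m → Set (Pt n)) (hA : ∀ i, (A i).OrdConnected)
    (B : Fin k' → Set (Pt n)) (hB : ∀ j, (B j).OrdConnected)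
    (σ : Fin m → Option (Fin k')) (ε : ℝ) : Prop :=
  PartialInj σ ∧
  (∀ i, σ i = none → EpsTrivial (IntervalMod k (A i) (hA i)) (2 * ε)) ∧
  (∀ j, (∀ i, σ i ≠ some j) → EpsTrivial (IntervalMod k (B j) (hB j)) (2 * ε)) ∧
  (∀ i j, σ i = some j →
    Interleaved (IntervalMod k (A i) (hA i)) (IntervalMod k (B j) (hB j)) ε)

/-- The bottleneck distance between the interval decomposable modules with barcodes
`A` and `B`. -/
def bottleneckDist (k : Type) [Field k] {n m k' : ℕ}
    (A : Fin m → Set (Pt n)) (hA : ∀ i, (A i).OrdConnected)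
    (B : Fin k' → Set (Pt n)) (hB : ∀ j, (B j).OrdConnected) : EReal :=
  sInf {x : EReal | ∃ (ε : ℝ) (σ : Fin m → Option (Fin k')),
    0 ≤ ε ∧ IsEpsMatching k A hA B hB σ ε ∧ x = (ε : EReal)}


lemma eabs_nonneg' (x : EReal) : (0 : EReal) ≤ eabs x := by
  rcases le_total 0 x with h | h
  · exact h.trans (le_max_left _ _)
  · refine le_trans ?_ (le_max_right _ _)
    rw [show (0:EReal) = -0 by simp]
    exact EReal.neg_le_neg_iff.2 h

lemma le_add_of_eabs_esub_le {ε : ℝ} {x y : EReal} (h : eabs (esub x y) ≤ (ε : EReal)) :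
    x ≤ y + (ε : EReal) ∧ y ≤ x + (ε : EReal) := by
  induction x using EReal.rec with
  | bot =>
    induction y using EReal.rec with
    | bot => simp
    | coe s => simp [esub, eabs] at h
    | top => simp [esub, eabs] at h
  | coe r =>
    induction y using EReal.rec with
    | bot => simp [esub, eabs] at h
    | coe s =>
      have h' : |r - s| ≤ ε := by
        have he : esub (r:EReal) (s:EReal) = ((r - s : ℝ) : EReal) := by
          simp [esub, ← EReal.coe_sub]
        rw [he] at h
        have : eabs ((r - s : ℝ) : EReal) = ((|r - s| : ℝ) : EReal) := by
          rw [eabs, ← EReal.coe_neg, EReal.coe_strictMono.monotone.map_max.symm, abs]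
        rw [this] at h
        exact_mod_cast h
      constructor
      · rw [← EReal.coe_add]; exact_mod_cast by cases abs_le.1 h'; linarith
      · rw [← EReal.coe_add]; exact_mod_cast by cases abs_le.1 h'; linarith
    | top => simp [esub, eabs] at h
  | top =>
    induction y using EReal.rec with
    | bot => simp [esub, eabs] at h
    | coe s => simp [esub, eabs] at h
    | top => simp

lemma lt_add_shift {A C : EReal} {ε u : ℝ} (h1 : C ≤ A + (ε:EReal)) (h2 : A < (u:EReal)) :
    C < ((u + ε : ℝ) : EReal) := by
  calc C ≤ A + (ε:EReal) := h1
    _ < (u:EReal) + (ε:EReal) := EReal.add_lt_add_right_coe h2 ε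
    _ = ((u+ε:ℝ):EReal) := (EReal.coe_add u ε).symm

lemma shift_lt_cancel {B D : EReal} {ε u : ℝ} (h1 : B ≤ D + (ε:EReal))
    (h2 : ((u + ε : ℝ):EReal) < B) : (u : EReal) < D := by
  by_contra hc
  push_neg at hc
  have h3 : D + (ε:EReal) ≤ (u:EReal) + (ε:EReal) := add_le_add_left hc _
  rw [← EReal.coe_add] at h3
  exact absurd (h2.trans_le (h1.trans h3)) (lt_irrefl _)

/-- The component of the shift morphism between interval modules. -/
def stepMap (I J : Set (Pt n)) (ε : ℝ) (u : Pt n) :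
    segSpace k I u →ₗ[k] segSpace k J (shiftPt u ε) where
  toFun x := ⟨if shiftPt u ε ∈ J then (x : k) else 0, fun h => by simp [h]⟩
  map_add' x y := by apply Subtype.ext; by_cases h : shiftPt u ε ∈ J <;> simp [h]
  map_smul' c x := by apply Subtype.ext; by_cases h : shiftPt u ε ∈ J <;> simp [h]

/-- The shift morphism between interval modules. -/
def stepHom (I J : Set (Pt n)) (hI : I.OrdConnected) (hJ : J.OrdConnected) (ε : ℝ)
    (hnat : ∀ u v : Pt n, u ≤ v → u ∈ I → shiftPt v ε ∈ J → (v ∈ I ↔ shiftPt u ε ∈ J)) :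
    PersHom (IntervalMod k I hI) ((IntervalMod k J hJ).shift ε) where
  app u := stepMap I J ε u
  natural {u v} h := by
    apply LinearMap.ext; intro x
    apply Subtype.ext
    show (if shiftPt v ε ∈ J then (if v ∈ I then x.1 else 0) else 0)
       = (if shiftPt v ε ∈ J then (if shiftPt u ε ∈ J then x.1 else 0) else 0)
    by_cases hv : shiftPt v ε ∈ J
    · simp only [if_pos hv]
      by_cases hu : u ∈ I
      · by_cases hvI : v ∈ I
        · rw [if_pos hvI, if_pos ((hnat u v h hu hv).1 hvI)]
        · rw [if_neg hvI, if_neg (fun hc => hvI ((hnat u v h hu hv).2 hc))]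
      · rw [x.2 hu]; simp
    · simp [hv]

lemma interleaved_intervals (I J : Set (Pt n)) (hI : I.OrdConnected) (hJ : J.OrdConnected)
    (ε : ℝ) (hε : 0 ≤ ε)
    (hIJ : ∀ u v : Pt n, u ≤ v → u ∈ I → shiftPt v ε ∈ J → (v ∈ I ↔ shiftPt u ε ∈ J))
    (hJI : ∀ u v : Pt n, u ≤ v → u ∈ J → shiftPt v ε ∈ I → (v ∈ J ↔ shiftPt u ε ∈ I))
    (hII : ∀ u : Pt n, u ∈ I → shiftPt (shiftPt u ε) ε ∈ I → shiftPt u ε ∈ J)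
    (hJJ : ∀ u : Pt n, u ∈ J → shiftPt (shiftPt u ε) ε ∈ J → shiftPt u ε ∈ I) :
    Interleaved (IntervalMod k I hI) (IntervalMod k J hJ) ε := by
  refine ⟨hε, stepHom I J hI hJ ε hIJ, stepHom J I hJ hI ε hJI, ?_, ?_⟩
  · intro u
    apply LinearMap.ext; intro x
    apply Subtype.ext
    show (if shiftPt (shiftPt u ε) ε ∈ I then (if shiftPt u ε ∈ J then x.1 else 0) else 0)
       = (if shiftPt (shiftPt u ε) ε ∈ I then x.1 else 0)
    by_cases h2 : shiftPt (shiftPt u ε) ε ∈ I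
    · simp only [if_pos h2]
      by_cases hu : u ∈ I
      · rw [if_pos (hII u hu h2)]
      · rw [x.2 hu]; simp
    · simp [h2]
  · intro u
    apply LinearMap.ext; intro x
    apply Subtype.ext
    show (if shiftPt (shiftPt u ε) ε ∈ J then (if shiftPt u ε ∈ I then x.1 else 0) else 0)
       = (if shiftPt (shiftPt u ε) ε ∈ J then x.1 else 0)
    by_cases h2 : shiftPt (shiftPt u ε) ε ∈ J
    · simp only [if_pos h2]
      by_cases hu : u ∈ J
      · rw [if_pos (hJJ u hu h2)]
      · rw [x.2 hu]; simp
    · simp [h2]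

theorem interleavingDist_le_supDist (a b c d : Fin 2 → EReal)
    (ha : ∀ i, a i ≠ ⊤) (hb : ∀ i, b i ≠ ⊥)
    (hc : ∀ i, c i ≠ ⊤) (hd : ∀ i, d i ≠ ⊥) (hab : ∀ i, a i < b i) (hcd : ∀ i, c i < d i)
    (h : max (supDist c a) (supDist d b) <
      min (⨅ i, esub (d i) (a i)) (⨅ i, esub (b i) (c i))) :
    interleavingDist (RectMod k a b) (RectMod k c d) ≤
      max (supDist c a) (supDist d b) := by
  set E : EReal := max (supDist c a) (supDist d b) with hEdef
  have hE0 : (0:EReal) ≤ E :=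
    le_trans (le_trans (eabs_nonneg' _) (le_iSup (fun i => eabs (esub (c i) (a i))) 0))
      (le_max_left _ _)
  have hEtop : E ≠ ⊤ := ne_top_of_lt h
  have hEbot : E ≠ ⊥ := fun hb => by simp [hb] at hE0
  set ε : ℝ := E.toReal with hedef
  have hεE : (ε : EReal) = E := EReal.coe_toReal hEtop hEbot
  have hε0 : (0:ℝ) ≤ ε := by
    have := hE0; rw [← hεE] at this; exact_mod_cast this
  have hca : ∀ i, eabs (esub (c i) (a i)) ≤ (ε:EReal) := fun i =>
    le_trans (le_trans (le_iSup (fun i => eabs (esub (c i) (a i))) i) (le_max_left _ _)) hεE.ge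
  have hdb : ∀ i, eabs (esub (d i) (b i)) ≤ (ε:EReal) := fun i =>
    le_trans (le_trans (le_iSup (fun i => eabs (esub (d i) (b i))) i) (le_max_right _ _)) hεE.ge
  have L1 : ∀ i, c i ≤ a i + (ε:EReal) := fun i => (le_add_of_eabs_esub_le (hca i)).1
  have L2 : ∀ i, a i ≤ c i + (ε:EReal) := fun i => (le_add_of_eabs_esub_le (hca i)).2
  have L3 : ∀ i, d i ≤ b i + (ε:EReal) := fun i => (le_add_of_eabs_esub_le (hdb i)).1
  have L4 : ∀ i, b i ≤ d i + (ε:EReal) := fun i => (le_add_of_eabs_esub_le (hdb i)).2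
  have hInt : Interleaved (RectMod k a b) (RectMod k c d) ε := by
    apply interleaved_intervals (box a b) (box c d) (box_ordConnected a b)
      (box_ordConnected c d) ε hε0
    · intro u v huv hu hv
      constructor
      · intro hvI i
        refine ⟨lt_add_shift (L1 i) (hu i).1, ?_⟩
        calc ((u i + ε:ℝ):EReal) ≤ ((v i + ε:ℝ):EReal) := by
              exact_mod_cast add_le_add_left (huv i) ε
          _ < d i := (hv i).2
      · intro _ i
        exact ⟨lt_of_lt_of_le (hu i).1 (by exact_mod_cast huv i),
          shift_lt_cancel (L3 i) (hv i).2⟩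
    · intro u v huv hu hv
      constructor
      · intro hvJ i
        refine ⟨lt_add_shift (L2 i) (hu i).1, ?_⟩
        calc ((u i + ε:ℝ):EReal) ≤ ((v i + ε:ℝ):EReal) := by
              exact_mod_cast add_le_add_left (huv i) ε
          _ < b i := (hv i).2
      · intro _ i
        exact ⟨lt_of_lt_of_le (hu i).1 (by exact_mod_cast huv i),
          shift_lt_cancel (L4 i) (hv i).2⟩
    · intro u hu h2 i
      exact ⟨lt_add_shift (L1 i) (hu i).1, shift_lt_cancel (L4 i) (h2 i).2⟩
    · intro u hu h2 i
      exact ⟨lt_add_shift (L2 i) (hu i).1, shift_lt_cancel (L3 i) (h2 i).2⟩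
  rw [← hεE]
  exact sInf_le ⟨ε, hInt, rfl⟩


end
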